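/- Let β be a q-bic form on an (n+1)-dimensional vector space V over a field k containing F_{q²}. The q-bic hypersurface X = {β(v,v) = 0} ⊂ P^n is smooth over k if and only if β is nonsingular, if and only if the Gram matrix (β(e_i, e_j))_{i,j} with respect to any basis is invertible. -/

import Mathlib

/-- the q-bic hypersurface X ⊂ Pⁿ attached to a q-bic form β on an
(n+1)-dimensional k-vector space is smooth over k (Jacobian criterion: the partial derivatives
`Σ_i a_{ij} x_i^q` have no common nonzero zero over the algebraic closure) if and only if
β is nonsingular, if and only if the Gram matrix is invertible. -/
theorem stmt_11 {p q ν n : ℕ} [Fact p.Prime] (hν : 0 < ν) (hq : q = p ^ ν)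
    {k : Type*} [Field k] [CharP k p]
    (hcontains : Nonempty (GaloisField p (2 * ν) →+* k))
    {V : Type*} [AddCommGroup V] [Module k V] [FiniteDimensional k V]
    (b : Module.Basis (Fin (n + 1)) k V)
    (β : V → V → k)
    (haddl : ∀ u v w : V, β (u + v) w = β u w + β v w)
    (haddr : ∀ u v w : V, β u (v + w) = β u v + β u w)
    (hsmull : ∀ (c : k) (u v : V), β (c • u) v = c ^ q * β u v)
    (hsmulr : ∀ (c : k) (u v : V), β u (c • v) = c * β u v)
    (A : Matrix (Fin (n + 1)) (Fin (n + 1)) k)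
    (hA : ∀ i j, A i j = β (b i) (b j)) :
    ((∀ x : Fin (n + 1) → AlgebraicClosure k,
        (∀ j, ∑ i, algebraMap k (AlgebraicClosure k) (A i j) * (x i) ^ q = 0) → x = 0)
      ↔ IsUnit A.det) ∧
    (IsUnit A.det ↔
      ((∀ v : V, (∀ w : V, β v w = 0) → v = 0) ∧
        (∀ w : V, (∀ v : V, β v w = 0) → w = 0))) := by
  classical
  have hp : p.Prime := Fact.out
  have hq0 : 0 < q := hq ▸ pow_pos hp.pos ν
  set K := AlgebraicClosure k with hK
  set f : k →+* K := algebraMap k K with hf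
  set A' : Matrix (Fin (n + 1)) (Fin (n + 1)) K := A.map f with hA'
  have hdet' : A'.det = f A.det := (RingHom.map_det f A).symm
  -- additivity homs
  have lemA : ∀ (c : Fin (n + 1) → k) (w : V),
      β (∑ i, c i • b i) w = ∑ i, c i ^ q * β (b i) w := by
    intro c w
    have := map_sum (AddMonoidHom.mk' (fun v => β v w) (fun u v => haddl u v w))
      (fun i => c i • b i) Finset.univ
    simp only [AddMonoidHom.mk'_apply] at this
    rw [this]
    exact Finset.sum_congr rfl fun i _ => hsmull (c i) (b i) w
  have lemB : ∀ (v : V) (d : Fin (n + 1) → k),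
      β v (∑ j, d j • b j) = ∑ j, d j * β v (b j) := by
    intro v d
    have := map_sum (AddMonoidHom.mk' (β v) (haddr v)) (fun j => d j • b j) Finset.univ
    simp only [AddMonoidHom.mk'_apply] at this
    rw [this]
    exact Finset.sum_congr rfl fun j _ => hsmulr (d j) v (b j)
  constructor
  · -- first iff
    constructor
    · intro h
      rw [isUnit_iff_ne_zero]
      intro hdet
      have hdet'0 : A'.det = 0 := by rw [hdet', hdet, map_zero]
      obtain ⟨y, hy0, hyA⟩ := Matrix.exists_vecMul_eq_zero_iff.mpr hdet'0
      choose x hx using fun i => IsAlgClosed.exists_pow_nat_eq (y i) hq0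
      have hx0 : x = 0 := by
        apply h
        intro j
        have := congr_fun hyA j
        simpa [Matrix.vecMul, dotProduct, hA', Matrix.map_apply, hx,
          mul_comm] using this
      apply hy0
      funext i
      rw [← hx i, hx0]
      simp [zero_pow hq0.ne']
    · intro hdet x hx
      have hdetK : A'.det ≠ 0 := by
        rw [hdet']
        simpa using (isUnit_iff_ne_zero.mp hdet)
      have hy : (fun i => x i ^ q) = 0 := by
        by_contra hy0
        apply hdetK
        rw [← Matrix.exists_vecMul_eq_zero_iff]
        refine ⟨_, hy0, ?_⟩
        funext j
        simpa [Matrix.vecMul, dotProduct, hA', Matrix.map_apply,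
          mul_comm] using hx j
      funext i
      have := congr_fun hy i
      simpa [pow_eq_zero_iff hq0.ne'] using this
  · -- second iff
    constructor
    · intro hdet
      have hdetne : A.det ≠ 0 := isUnit_iff_ne_zero.mp hdet
      constructor
      · intro v hv
        set c : Fin (n + 1) → k := fun i => b.repr v i with hc
        have hvc : ∑ i, c i • b i = v := b.sum_repr v
        have hcq : (fun i => c i ^ q) = 0 := by
          by_contra hc0
          apply hdetne
          rw [← Matrix.exists_vecMul_eq_zero_iff]
          refine ⟨_, hc0, ?_⟩
          funext j
          have := hv (b j)
          rw [← hvc, lemA] at this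
          simpa [Matrix.vecMul, dotProduct, hA] using this
        have hc0 : c = 0 := by
          funext i
          have := congr_fun hcq i
          simpa [pow_eq_zero_iff hq0.ne'] using this
        rw [← hvc, hc0]
        simp
      · intro w hw
        set d : Fin (n + 1) → k := fun j => b.repr w j with hd
        have hwd : ∑ j, d j • b j = w := b.sum_repr w
        have hd0 : d = 0 := by
          by_contra hd0
          apply hdetne
          rw [← Matrix.exists_mulVec_eq_zero_iff]
          refine ⟨_, hd0, ?_⟩
          funext i
          have := hw (b i)
          rw [← hwd, lemB] at this
          simpa [Matrix.mulVec, dotProduct, hA, mul_comm] using this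
        rw [← hwd, hd0]
        simp
    · rintro ⟨-, hright⟩
      rw [isUnit_iff_ne_zero]
      intro hdet
      obtain ⟨d, hd0, hdA⟩ := Matrix.exists_mulVec_eq_zero_iff.mpr hdet
      set w : V := ∑ j, d j • b j with hw
      have hw0 : w = 0 := by
        apply hright
        intro v
        have hvc : ∑ i, (b.repr v) i • b i = v := b.sum_repr v
        rw [← hvc, lemA]
        have : ∀ i, β (b i) w = 0 := by
          intro i
          rw [hw, lemB]
          have := congr_fun hdA i
          simpa [Matrix.mulVec, dotProduct, hA, mul_comm] using this
        simp [this]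
      apply hd0
      funext j
      exact Fintype.linearIndependent_iff.mp b.linearIndependent d (hw ▸ hw0) j
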